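/- Let L = L₀ ⊕ L₁ be a complex Leibniz superalgebra with dim L₀ = n and dim L₁ = m ≥ 1. If L has nilindex n + m + 1 (i.e. L^{n+m} ≠ 0 and L^{n+m+1} = 0), then either m = n or m = n + 1; more precisely, m = n when n + m is even and m = n + 1 when n + m is odd. -/

import Mathlib

/-- A complex Leibniz superalgebra structure on a vector space `V`:
a bilinear bracket together with an internal ℤ₂-grading `V = L0 ⊕ L1`
such that the bracket respects the grading and the Leibniz superidentity
`[x,[y,z]] = [[x,y],z] − (−1)^{αβ}[[x,z],y]` holds for homogeneous `y, z`. -/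
structure LeibnizSuperAlg (V : Type*) [AddCommGroup V] [Module ℂ V] where
  br : V →ₗ[ℂ] V →ₗ[ℂ] V
  L0 : Submodule ℂ V
  L1 : Submodule ℂ V
  compl : IsCompl L0 L1
  grade00 : ∀ x ∈ L0, ∀ y ∈ L0, br x y ∈ L0
  grade01 : ∀ x ∈ L0, ∀ y ∈ L1, br x y ∈ L1
  grade10 : ∀ x ∈ L1, ∀ y ∈ L0, br x y ∈ L1
  grade11 : ∀ x ∈ L1, ∀ y ∈ L1, br x y ∈ L0
  super_ee : ∀ (x : V), ∀ y ∈ L0, ∀ z ∈ L0,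
    br x (br y z) = br (br x y) z - br (br x z) y
  super_eo : ∀ (x : V), ∀ y ∈ L0, ∀ z ∈ L1,
    br x (br y z) = br (br x y) z - br (br x z) y
  super_oe : ∀ (x : V), ∀ y ∈ L1, ∀ z ∈ L0,
    br x (br y z) = br (br x y) z - br (br x z) y
  super_oo : ∀ (x : V), ∀ y ∈ L1, ∀ z ∈ L1,
    br x (br y z) = br (br x y) z + br (br x z) y

namespace LeibnizSuperAlg

variable {V : Type*} [AddCommGroup V] [Module ℂ V]

/-- The span of all products `[u,v]` with `u ∈ S`, `v ∈ T`. -/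
def prodSpan (A : LeibnizSuperAlg V) (S T : Submodule ℂ V) : Submodule ℂ V :=
  Submodule.span ℂ {z : V | ∃ u ∈ S, ∃ v ∈ T, z = A.br u v}

/-- `A.lcs k` is the `(k+1)`-st term `L^{k+1}` of the descending central series:
`L¹ = L`, `L^{k+1} = [L^k, L]`. -/
def lcs (A : LeibnizSuperAlg V) : ℕ → Submodule ℂ V
  | 0 => ⊤
  | k + 1 => A.prodSpan (lcs A k) ⊤

/-- `A.lcs0 k` is the `(k+1)`-st term `L₀^{k+1}` of the descending central series
of the even part: `L₀¹ = L₀`, `L₀^{k+1} = [L₀^k, L₀]`. -/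
def lcs0 (A : LeibnizSuperAlg V) : ℕ → Submodule ℂ V
  | 0 => A.L0
  | k + 1 => A.prodSpan (lcs0 A k) A.L0

/-- Nilpotency: some term of the descending central series vanishes. -/
def IsNilpotent (A : LeibnizSuperAlg V) : Prop := ∃ s, A.lcs s = ⊥

/-- `S` generates `L`: the smallest subspace containing `S` and closed under the
product is `L` itself. -/
def Generates (A : LeibnizSuperAlg V) (S : Set V) : Prop :=
  ∀ W : Submodule ℂ V, S ⊆ W → (∀ u ∈ W, ∀ v ∈ W, A.br u v ∈ W) → W = ⊤

/-- The operator of right multiplication `R_x : z ↦ [z, x]`. -/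
def R (A : LeibnizSuperAlg V) (x : V) : V →ₗ[ℂ] V := A.br.flip x

end LeibnizSuperAlg

namespace LeibnizSuperAlg

variable {V : Type*} [AddCommGroup V] [Module ℂ V]
variable (A : LeibnizSuperAlg V)

lemma br_mem_prodSpan {S T : Submodule ℂ V} {u v : V} (hu : u ∈ S) (hv : v ∈ T) :
    A.br u v ∈ A.prodSpan S T :=
  Submodule.subset_span ⟨u, hu, v, hv, rfl⟩

lemma prodSpan_le {S T : Submodule ℂ V} {W : Submodule ℂ V}
    (h : ∀ u ∈ S, ∀ v ∈ T, A.br u v ∈ W) : A.prodSpan S T ≤ W := by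
  apply Submodule.span_le.2
  rintro z ⟨u, hu, v, hv, rfl⟩
  exact h u hu v hv

lemma prodSpan_mono {S S' T T' : Submodule ℂ V} (hS : S ≤ S') (hT : T ≤ T') :
    A.prodSpan S T ≤ A.prodSpan S' T' :=
  A.prodSpan_le fun u hu v hv => A.br_mem_prodSpan (hS hu) (hT hv)

lemma lcs_succ (k : ℕ) : A.lcs (k + 1) = A.prodSpan (A.lcs k) ⊤ := rfl

lemma br_mem_lcs_succ {k : ℕ} {u : V} (hu : u ∈ A.lcs k) (v : V) :
    A.br u v ∈ A.lcs (k + 1) := A.br_mem_prodSpan hu trivial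

lemma lcs_succ_le (k : ℕ) : A.lcs (k + 1) ≤ A.lcs k := by
  induction k with
  | zero => exact le_top
  | succ k ih => exact A.prodSpan_mono ih le_rfl

lemma lcs_antitone : ∀ {j k : ℕ}, j ≤ k → A.lcs k ≤ A.lcs j := by
  intro j k h
  induction k with
  | zero => simp_all
  | succ k ih =>
    rcases Nat.lt_or_ge j (k+1) with h' | h'
    · exact (A.lcs_succ_le k).trans (ih (by omega))
    · have : j = k + 1 := by omega
      subst this; exact le_rfl

noncomputable def P0 : V →ₗ[ℂ] V :=
  A.L0.subtype ∘ₗ A.L0.linearProjOfIsCompl A.L1 A.compl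

noncomputable def P1 : V →ₗ[ℂ] V :=
  A.L1.subtype ∘ₗ A.L1.linearProjOfIsCompl A.L0 A.compl.symm

lemma P0_mem (x : V) : A.P0 x ∈ A.L0 := (A.L0.linearProjOfIsCompl A.L1 A.compl x).2

lemma P1_mem (x : V) : A.P1 x ∈ A.L1 := (A.L1.linearProjOfIsCompl A.L0 A.compl.symm x).2

lemma P0_add_P1 (x : V) : A.P0 x + A.P1 x = x :=
  Submodule.projection_add_projection_eq_self A.compl x

lemma P0_eq_self {x : V} (hx : x ∈ A.L0) : A.P0 x = x := by
  exact congrArg Subtype.val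
    (Submodule.projectionOnto_apply_left A.compl ⟨x, hx⟩)

lemma P0_eq_zero {x : V} (hx : x ∈ A.L1) : A.P0 x = 0 := by
  exact congrArg Subtype.val
    (Submodule.projectionOnto_apply_of_mem_right A.compl hx)

lemma P1_eq_self {x : V} (hx : x ∈ A.L1) : A.P1 x = x := by
  exact congrArg Subtype.val
    (Submodule.projectionOnto_apply_left A.compl.symm ⟨x, hx⟩)

lemma P1_eq_zero {x : V} (hx : x ∈ A.L0) : A.P1 x = 0 := by
  exact congrArg Subtype.val
    (Submodule.projectionOnto_apply_of_mem_right A.compl.symm hx)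

lemma P0_mem_lcs : ∀ (k : ℕ), ∀ x ∈ A.lcs k, A.P0 x ∈ A.lcs k := by
  intro k
  induction k with
  | zero => intro x _; trivial
  | succ k ih =>
    intro x hx
    have : A.lcs (k+1) ≤ Submodule.comap (A.P0) (A.lcs (k+1)) := by
      rw [A.lcs_succ]
      apply Submodule.span_le.2
      rintro z ⟨u, hu, v, -, rfl⟩
      have hu' : A.P1 u ∈ A.lcs k := by
        have := A.P0_add_P1 u
        have h0 : A.P0 u ∈ A.lcs k := ih u hu
        have : A.P1 u = u - A.P0 u := by
          rw [eq_sub_iff_add_eq, add_comm]; exact this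
        rw [this]; exact (A.lcs k).sub_mem hu h0
      have expand : A.br u v =
          A.br (A.P0 u) (A.P0 v) + A.br (A.P0 u) (A.P1 v)
          + A.br (A.P1 u) (A.P0 v) + A.br (A.P1 u) (A.P1 v) := by
        conv_lhs => rw [← A.P0_add_P1 u, ← A.P0_add_P1 v]
        simp [map_add]
        abel
      have hP0z : A.P0 (A.br u v) =
          A.br (A.P0 u) (A.P0 v) + A.br (A.P1 u) (A.P1 v) := by
        rw [expand]
        simp only [map_add]
        rw [A.P0_eq_self (A.grade00 _ (A.P0_mem u) _ (A.P0_mem v)),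
            A.P0_eq_zero (A.grade01 _ (A.P0_mem u) _ (A.P1_mem v)),
            A.P0_eq_zero (A.grade10 _ (A.P1_mem u) _ (A.P0_mem v)),
            A.P0_eq_self (A.grade11 _ (A.P1_mem u) _ (A.P1_mem v))]
        abel
      show A.P0 (A.br u v) ∈ A.lcs (k+1)
      rw [hP0z]
      exact (A.lcs (k+1)).add_mem
        (A.br_mem_lcs_succ (ih u hu) _) (A.br_mem_lcs_succ hu' _)
    exact this hx

lemma P1_mem_lcs (k : ℕ) {x : V} (hx : x ∈ A.lcs k) : A.P1 x ∈ A.lcs k := by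
  have h0 : A.P0 x ∈ A.lcs k := A.P0_mem_lcs k x hx
  have : A.P1 x = x - A.P0 x := by
    rw [eq_sub_iff_add_eq, add_comm]; exact A.P0_add_P1 x
  rw [this]; exact (A.lcs k).sub_mem hx h0


lemma br_lcs : ∀ (b a : ℕ), ∀ u ∈ A.lcs a, ∀ v ∈ A.lcs b,
    A.br u v ∈ A.lcs (a + b + 1) := by
  intro b
  induction b with
  | zero => intro a u hu v _; exact A.br_mem_lcs_succ hu v
  | succ b ih =>
    intro a u hu v hv
    have hle : A.lcs (b+1) ≤ Submodule.comap (A.br u) (A.lcs (a + (b+1) + 1)) := by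
      rw [A.lcs_succ b]
      apply Submodule.span_le.2
      rintro z ⟨p, hp, q, -, rfl⟩
      show A.br u (A.br p q) ∈ A.lcs (a + (b+1) + 1)
      have key : ∀ pi : V, (pi ∈ A.L0 ∨ pi ∈ A.L1) → pi ∈ A.lcs b →
          ∀ qj : V, (qj ∈ A.L0 ∨ qj ∈ A.L1) →
          A.br u (A.br pi qj) ∈ A.lcs (a + (b+1) + 1) := by
        intro pi hpiL hpib qj hqjL
        have t1 : A.br (A.br u pi) qj ∈ A.lcs (a + (b+1) + 1) := by
          have h1 : A.br u pi ∈ A.lcs (a + b + 1) := ih a u hu pi hpib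
          have h2 := A.br_mem_lcs_succ h1 qj
          have e : a + b + 1 + 1 = a + (b+1) + 1 := by omega
          rw [e] at h2; exact h2
        have t2 : A.br (A.br u qj) pi ∈ A.lcs (a + (b+1) + 1) := by
          have h1 : A.br u qj ∈ A.lcs (a + 1) := A.br_mem_lcs_succ hu qj
          have h2 := ih (a+1) _ h1 pi hpib
          have e : a + 1 + b + 1 = a + (b+1) + 1 := by omega
          rw [e] at h2; exact h2
        rcases hpiL with hpi | hpi <;> rcases hqjL with hqj | hqj
        · rw [A.super_ee u pi hpi qj hqj]; exact Submodule.sub_mem _ t1 t2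
        · rw [A.super_eo u pi hpi qj hqj]; exact Submodule.sub_mem _ t1 t2
        · rw [A.super_oe u pi hpi qj hqj]; exact Submodule.sub_mem _ t1 t2
        · rw [A.super_oo u pi hpi qj hqj]; exact Submodule.add_mem _ t1 t2
      have expand : A.br p q =
          A.br (A.P0 p) (A.P0 q) + A.br (A.P0 p) (A.P1 q)
          + A.br (A.P1 p) (A.P0 q) + A.br (A.P1 p) (A.P1 q) := by
        conv_lhs => rw [← A.P0_add_P1 p, ← A.P0_add_P1 q]
        simp only [map_add, LinearMap.add_apply]
        abel
      rw [expand]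
      simp only [map_add]
      exact Submodule.add_mem _ (Submodule.add_mem _ (Submodule.add_mem _
        (key _ (Or.inl (A.P0_mem p)) (A.P0_mem_lcs b p hp) _ (Or.inl (A.P0_mem q)))
        (key _ (Or.inl (A.P0_mem p)) (A.P0_mem_lcs b p hp) _ (Or.inr (A.P1_mem q))))
        (key _ (Or.inr (A.P1_mem p)) (A.P1_mem_lcs b hp) _ (Or.inl (A.P0_mem q))))
        (key _ (Or.inr (A.P1_mem p)) (A.P1_mem_lcs b hp) _ (Or.inr (A.P1_mem q)))
    exact hle hv

/-- The key stepping lemma along the descending central series. -/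
lemma step (x e : V) (k : ℕ) (hgen : (⊤ : Submodule ℂ V) ≤ (ℂ ∙ x) ⊔ A.lcs 1)
    (hek : e ∈ A.lcs k) (he : A.lcs k ≤ (ℂ ∙ e) ⊔ A.lcs (k+1)) :
    A.lcs (k+1) ≤ (ℂ ∙ (A.br e x)) ⊔ A.lcs (k+2) := by
  rw [A.lcs_succ k]
  apply Submodule.span_le.2
  rintro z ⟨u, hu, v, -, rfl⟩
  obtain ⟨y, hy, u', hu', rfl⟩ := Submodule.mem_sup.1 (he hu)
  obtain ⟨α, rfl⟩ := Submodule.mem_span_singleton.1 hy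
  obtain ⟨w, hw, v', hv', hv⟩ := Submodule.mem_sup.1 (hgen (Submodule.mem_top (x := v)))
  obtain ⟨β, rfl⟩ := Submodule.mem_span_singleton.1 hw
  subst hv
  have expand : A.br (α • e + u') (β • x + v') =
      (α * β) • A.br e x + α • A.br e v' + A.br u' (β • x + v') := by
    simp only [map_add, map_smul, LinearMap.add_apply, LinearMap.smul_apply]
    module
  rw [expand]
  refine Submodule.add_mem _ (Submodule.add_mem _ ?_ ?_) ?_
  · exact Submodule.mem_sup_left (Submodule.smul_mem _ _ (Submodule.mem_span_singleton_self _))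
  · refine Submodule.mem_sup_right (Submodule.smul_mem _ _ ?_)
    exact A.br_lcs 1 k e hek v' hv'
  · exact Submodule.mem_sup_right (A.br_mem_lcs_succ hu' _)

lemma inter_step (P : V →ₗ[ℂ] V) (W : Submodule ℂ V) (e : V) (k : ℕ)
    (hPe : P e = 0) (hPfix : ∀ z ∈ W, P z = z)
    (hPlcs : ∀ y ∈ A.lcs (k+1), P y ∈ A.lcs (k+1))
    (he : A.lcs k ≤ (ℂ ∙ e) ⊔ A.lcs (k+1)) :
    A.lcs k ⊓ W ≤ A.lcs (k+1) := by
  rintro z ⟨hz, hzW⟩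
  obtain ⟨y, hy, w, hw, hsum⟩ := Submodule.mem_sup.1 (he hz)
  obtain ⟨α, rfl⟩ := Submodule.mem_span_singleton.1 hy
  have : P z = P w := by
    rw [← hsum]
    simp [map_add, map_smul, hPe]
  rw [← hPfix z hzW, this]
  exact hPlcs w hw

lemma lcs_eq_inf_sup (k : ℕ) :
    A.lcs k = (A.lcs k ⊓ A.L0) ⊔ (A.lcs k ⊓ A.L1) := by
  refine le_antisymm ?_ (sup_le inf_le_left inf_le_left)
  intro z hz
  rw [← A.P0_add_P1 z]
  exact Submodule.add_mem _
    (Submodule.mem_sup_left (Submodule.mem_inf.2 ⟨A.P0_mem_lcs k z hz, A.P0_mem z⟩))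
    (Submodule.mem_sup_right (Submodule.mem_inf.2 ⟨A.P1_mem_lcs k hz, A.P1_mem z⟩))

lemma finrank_lcs_eq [FiniteDimensional ℂ V] (k : ℕ) :
    Module.finrank ℂ (A.lcs k ⊓ A.L0 : Submodule ℂ V)
      + Module.finrank ℂ (A.lcs k ⊓ A.L1 : Submodule ℂ V)
      = Module.finrank ℂ (A.lcs k) := by
  have h := Submodule.finrank_sup_add_finrank_inf_eq (A.lcs k ⊓ A.L0) (A.lcs k ⊓ A.L1)
  have hinf : (A.lcs k ⊓ A.L0) ⊓ (A.lcs k ⊓ A.L1) = ⊥ := by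
    rw [eq_bot_iff]
    intro z hz
    have h0 : z ∈ A.L0 := hz.1.2
    have h1 : z ∈ A.L1 := hz.2.2
    have := A.compl.disjoint.eq_bot
    rw [← this]
    exact Submodule.mem_inf.2 ⟨h0, h1⟩
  rw [hinf, ← A.lcs_eq_inf_sup k, finrank_bot] at h
  omega

lemma exists_gen {W U : Submodule ℂ V} [FiniteDimensional ℂ V] (hWU : W ≤ U)
    (h : Module.finrank ℂ U ≤ Module.finrank ℂ W + 1) :
    ∃ x ∈ U, U ≤ (ℂ ∙ x) ⊔ W := by
  by_cases hUW : U ≤ W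
  · exact ⟨0, U.zero_mem, hUW.trans le_sup_right⟩
  · obtain ⟨x, hxU, hxW⟩ := SetLike.not_le_iff_exists.1 hUW
    refine ⟨x, hxU, ?_⟩
    have hle : ((ℂ ∙ x) ⊔ W) ≤ U :=
      sup_le ((Submodule.span_singleton_le_iff_mem x U).2 hxU) hWU
    have hlt : W < (ℂ ∙ x) ⊔ W := by
      refine lt_of_le_of_ne le_sup_right fun hEq => hxW ?_
      have hx : x ∈ (ℂ ∙ x) ⊔ W := Submodule.mem_sup_left (Submodule.mem_span_singleton_self x)
      rwa [← hEq] at hx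
    have h1 : Module.finrank ℂ W < Module.finrank ℂ ((ℂ ∙ x) ⊔ W : Submodule ℂ V) :=
      Submodule.finrank_lt_finrank_of_lt hlt
    exact (Submodule.eq_of_le_of_finrank_le hle (by omega)).ge

end LeibnizSuperAlg


/-- If a complex Leibniz superalgebra with `dim L₀ = n`, `dim L₁ = m ≥ 1`
has nilindex `n + m + 1` (`L^{n+m} ≠ 0`, `L^{n+m+1} = 0`), then `m = n` or `m = n + 1`;
precisely, `m = n` when `n + m` is even and `m = n + 1` when `n + m` is odd. -/
theorem statement9 {V : Type*} [AddCommGroup V] [Module ℂ V] [FiniteDimensional ℂ V]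
    (A : LeibnizSuperAlg V) (n m : ℕ)
    (hn : Module.finrank ℂ A.L0 = n) (hm : Module.finrank ℂ A.L1 = m) (hm1 : 1 ≤ m)
    (h1 : A.lcs (n + m - 1) ≠ ⊥) (h2 : A.lcs (n + m) = ⊥) :
    (m = n ∨ m = n + 1) ∧ (Even (n + m) → m = n) ∧ (Odd (n + m) → m = n + 1) := by
  classical
  open LeibnizSuperAlg in
  have hNM : Module.finrank ℂ V = n + m := by
    rw [← hn, ← hm, ← Submodule.finrank_add_eq_of_isCompl A.compl]
  have hd0 : Module.finrank ℂ (A.lcs 0) = n + m := by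
    show Module.finrank ℂ (⊤ : Submodule ℂ V) = n + m
    rw [finrank_top]; exact hNM
  have hstab : ∀ k, A.lcs (k + 1) = A.lcs k → ∀ j, A.lcs (k + j) = A.lcs k := by
    intro k hk j
    induction j with
    | zero => rfl
    | succ j ih =>
      have e : k + (j + 1) = (k + j) + 1 := rfl
      rw [e, A.lcs_succ, ih, ← A.lcs_succ, hk]
  have hstrict : ∀ k, k + 1 ≤ n + m → A.lcs (k + 1) < A.lcs k := by
    intro k hk
    rcases lt_or_eq_of_le (A.lcs_succ_le k) with h | h
    · exact h
    · exfalso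
      have e1 : A.lcs (n + m - 1) = A.lcs k := by
        have := hstab k h (n + m - 1 - k)
        rwa [show k + (n + m - 1 - k) = n + m - 1 by omega] at this
      have e2 : A.lcs (n + m) = A.lcs k := by
        have := hstab k h (n + m - k)
        rwa [show k + (n + m - k) = n + m by omega] at this
      exact h1 (by rw [e1, ← e2, h2])
  have hdlt : ∀ k, k + 1 ≤ n + m →
      Module.finrank ℂ (A.lcs (k + 1)) < Module.finrank ℂ (A.lcs k) :=
    fun k hk => Submodule.finrank_lt_finrank_of_lt (hstrict k hk)
  have hdlow : ∀ j, j ≤ n + m → j ≤ Module.finrank ℂ (A.lcs (n + m - j)) := by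
    intro j
    induction j with
    | zero => intro _; omega
    | succ j ih =>
      intro hj
      have h' := ih (by omega)
      have h'' := hdlt (n + m - (j + 1)) (by omega)
      rw [show n + m - (j + 1) + 1 = n + m - j by omega] at h''
      omega
  have hdhigh : ∀ k, k ≤ n + m → Module.finrank ℂ (A.lcs k) + k ≤ n + m := by
    intro k
    induction k with
    | zero => intro _; omega
    | succ k ih =>
      intro hk
      have := hdlt k hk
      have := ih (by omega)
      omega
  have hdeq : ∀ k, k ≤ n + m → Module.finrank ℂ (A.lcs k) + k = n + m := by
    intro k hk
    have hl := hdlow (n + m - k) (by omega)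
    rw [show n + m - (n + m - k) = k by omega] at hl
    have := hdhigh k hk
    omega
  have ha1 : Module.finrank ℂ (A.lcs 1 ⊓ A.L0 : Submodule ℂ V) ≤ n :=
    hn ▸ Submodule.finrank_mono inf_le_right
  have hb1 : Module.finrank ℂ (A.lcs 1 ⊓ A.L1 : Submodule ℂ V) ≤ m :=
    hm ▸ Submodule.finrank_mono inf_le_right
  have hd1 : Module.finrank ℂ (A.lcs 1) + 1 = n + m := hdeq 1 (by omega)
  have hab1 := A.finrank_lcs_eq 1
  rcases (by omega :
      (Module.finrank ℂ (A.lcs 1 ⊓ A.L0 : Submodule ℂ V) = n ∧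
        Module.finrank ℂ (A.lcs 1 ⊓ A.L1 : Submodule ℂ V) + 1 = m) ∨
      (Module.finrank ℂ (A.lcs 1 ⊓ A.L0 : Submodule ℂ V) + 1 = n ∧
        Module.finrank ℂ (A.lcs 1 ⊓ A.L1 : Submodule ℂ V) = m)) with ⟨hA, hB⟩ | ⟨hA, hB⟩
  · -- odd generator case
    have hL0le : A.L0 ≤ A.lcs 1 := by
      have e : A.lcs 1 ⊓ A.L0 = A.L0 :=
        Submodule.eq_of_le_of_finrank_le inf_le_right (by rw [hn, hA])
      rw [← e]; exact inf_le_left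
    obtain ⟨x, hxL1, hxgen⟩ := LeibnizSuperAlg.exists_gen
      (inf_le_right : A.lcs 1 ⊓ A.L1 ≤ A.L1) (by rw [hm]; omega)
    have hgen : (⊤ : Submodule ℂ V) ≤ (ℂ ∙ x) ⊔ A.lcs 1 := by
      rw [← A.compl.codisjoint.eq_top]
      exact sup_le (hL0le.trans le_sup_right)
        (hxgen.trans (sup_le le_sup_left (inf_le_left.trans le_sup_right)))
    have inv : ∀ k, ∃ e, e ∈ A.lcs k ∧ (Even k → e ∈ A.L1) ∧ (¬ Even k → e ∈ A.L0) ∧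
        A.lcs k ≤ (ℂ ∙ e) ⊔ A.lcs (k + 1) := by
      intro k
      induction k with
      | zero =>
        exact ⟨x, Submodule.mem_top, fun _ => hxL1, fun h => absurd Even.zero h, hgen⟩
      | succ k ih =>
        obtain ⟨e, hek, hev, hod, he⟩ := ih
        refine ⟨A.br e x, A.br_mem_lcs_succ hek x, ?_, ?_, A.step x e k hgen hek he⟩
        · intro hk1
          have hko : ¬ Even k := by simpa [Nat.even_add_one] using hk1
          exact A.grade01 e (hod hko) x hxL1
        · intro hk1
          have hke : Even k := by
            by_contra hke
            exact hk1 (Nat.even_add_one.2 hke)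
          exact A.grade11 e (hev hke) x hxL1
    have recEven : ∀ k, Even k → A.lcs k ⊓ A.L0 = A.lcs (k + 1) ⊓ A.L0 := by
      intro k hk
      obtain ⟨e, hek, hev, hod, he⟩ := inv k
      refine le_antisymm ?_ (inf_le_inf_right _ (A.lcs_succ_le k))
      intro z hz
      obtain ⟨hz1, hz2⟩ := Submodule.mem_inf.1 hz
      exact Submodule.mem_inf.2
        ⟨A.inter_step A.P0 A.L0 e k (A.P0_eq_zero (hev hk)) (fun w hw => A.P0_eq_self hw)
          (fun y hy => A.P0_mem_lcs (k + 1) y hy) he hz, hz2⟩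
    have recOdd : ∀ k, ¬ Even k → A.lcs k ⊓ A.L1 = A.lcs (k + 1) ⊓ A.L1 := by
      intro k hk
      obtain ⟨e, hek, hev, hod, he⟩ := inv k
      refine le_antisymm ?_ (inf_le_inf_right _ (A.lcs_succ_le k))
      intro z hz
      obtain ⟨hz1, hz2⟩ := Submodule.mem_inf.1 hz
      exact Submodule.mem_inf.2
        ⟨A.inter_step A.P1 A.L1 e k (A.P1_eq_zero (hod hk)) (fun w hw => A.P1_eq_self hw)
          (fun y hy => A.P1_mem_lcs (k + 1) hy) he hz, hz2⟩
    have key : ∀ j, j ≤ n + m →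
        (Module.finrank ℂ (A.lcs (n + m - j) ⊓ A.L1 : Submodule ℂ V) : ℤ)
          - (Module.finrank ℂ (A.lcs (n + m - j) ⊓ A.L0 : Submodule ℂ V) : ℤ)
        = (if Even (n + m - j) then (if Even (n + m) then (0 : ℤ) else 1)
           else (if Even (n + m) then (-1 : ℤ) else 0)) := by
      intro j
      induction j with
      | zero =>
        intro _
        rw [show n + m - 0 = n + m from rfl, h2, bot_inf_eq, bot_inf_eq, finrank_bot]
        by_cases hp : Even (n + m) <;> simp [hp]
      | succ j ih =>
        intro hj
        have ihv := ih (by omega)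
        have hk1 : n + m - j = (n + m - (j + 1)) + 1 := by omega
        rw [hk1] at ihv
        set k := n + m - (j + 1) with hk
        have habk := A.finrank_lcs_eq k
        have habk1 := A.finrank_lcs_eq (k + 1)
        have hdk := hdeq k (by omega)
        have hdk1 := hdeq (k + 1) (by omega)
        by_cases hp : Even k
        · have haeq : A.lcs k ⊓ A.L0 = A.lcs (k + 1) ⊓ A.L0 := recEven k hp
          have hfr : Module.finrank ℂ (A.lcs k ⊓ A.L0 : Submodule ℂ V)
              = Module.finrank ℂ (A.lcs (k + 1) ⊓ A.L0 : Submodule ℂ V) := by rw [haeq]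
          have hb : Module.finrank ℂ (A.lcs k ⊓ A.L1 : Submodule ℂ V)
              = Module.finrank ℂ (A.lcs (k + 1) ⊓ A.L1 : Submodule ℂ V) + 1 := by omega
          have hp1 : ¬ Even (k + 1) := by simp [Nat.even_add_one, hp]
          rw [if_neg hp1] at ihv
          rw [if_pos hp, hfr, hb]
          by_cases hnm : Even (n + m)
          · rw [if_pos hnm] at ihv ⊢; push_cast at ihv ⊢; omega
          · rw [if_neg hnm] at ihv ⊢; push_cast at ihv ⊢; omega
        · have hbeq : A.lcs k ⊓ A.L1 = A.lcs (k + 1) ⊓ A.L1 := recOdd k hp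
          have hfr : Module.finrank ℂ (A.lcs k ⊓ A.L1 : Submodule ℂ V)
              = Module.finrank ℂ (A.lcs (k + 1) ⊓ A.L1 : Submodule ℂ V) := by rw [hbeq]
          have ha : Module.finrank ℂ (A.lcs k ⊓ A.L0 : Submodule ℂ V)
              = Module.finrank ℂ (A.lcs (k + 1) ⊓ A.L0 : Submodule ℂ V) + 1 := by omega
          have hp1 : Even (k + 1) := Nat.even_add_one.2 hp
          rw [if_pos hp1] at ihv
          rw [if_neg hp, hfr, ha]
          by_cases hnm : Even (n + m)
          · rw [if_pos hnm] at ihv ⊢; push_cast at ihv ⊢; omega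
          · rw [if_neg hnm] at ihv ⊢; push_cast at ihv ⊢; omega
    have hfin := key (n + m) le_rfl
    rw [show n + m - (n + m) = 0 by omega] at hfin
    have e1 : A.lcs 0 ⊓ A.L1 = A.L1 := by
      rw [show A.lcs 0 = (⊤ : Submodule ℂ V) from rfl, top_inf_eq]
    have e0 : A.lcs 0 ⊓ A.L0 = A.L0 := by
      rw [show A.lcs 0 = (⊤ : Submodule ℂ V) from rfl, top_inf_eq]
    rw [e1, e0, hm, hn, if_pos Even.zero] at hfin
    by_cases hnm : Even (n + m)
    · rw [if_pos hnm] at hfin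
      have hmn : m = n := by omega
      exact ⟨Or.inl hmn, fun _ => hmn, fun hodd => ((Nat.not_odd_iff_even.2 hnm) hodd).elim⟩
    · rw [if_neg hnm] at hfin
      have hmn : m = n + 1 := by omega
      exact ⟨Or.inr hmn, fun he => (hnm he).elim, fun _ => hmn⟩
  · -- even generator case: contradiction
    exfalso
    have hL1le : A.L1 ≤ A.lcs 1 := by
      have e : A.lcs 1 ⊓ A.L1 = A.L1 :=
        Submodule.eq_of_le_of_finrank_le inf_le_right (by rw [hm, hB])
      rw [← e]; exact inf_le_left
    obtain ⟨x, hxL0, hxgen⟩ := LeibnizSuperAlg.exists_gen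
      (inf_le_right : A.lcs 1 ⊓ A.L0 ≤ A.L0) (by rw [hn]; omega)
    have hgen : (⊤ : Submodule ℂ V) ≤ (ℂ ∙ x) ⊔ A.lcs 1 := by
      rw [← A.compl.codisjoint.eq_top]
      exact sup_le (hxgen.trans (sup_le le_sup_left (inf_le_left.trans le_sup_right)))
        (hL1le.trans le_sup_right)
    have inv : ∀ k, ∃ e, e ∈ A.L0 ∧ e ∈ A.lcs k ∧ A.lcs k ≤ (ℂ ∙ e) ⊔ A.lcs (k + 1) := by
      intro k
      induction k with
      | zero => exact ⟨x, hxL0, Submodule.mem_top, hgen⟩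
      | succ k ih =>
        obtain ⟨e, heL, hek, he⟩ := ih
        exact ⟨A.br e x, A.grade00 e heL x hxL0, A.br_mem_lcs_succ hek x,
          A.step x e k hgen hek he⟩
    have hL1lcs : ∀ k, A.L1 ≤ A.lcs k := by
      intro k
      induction k with
      | zero => exact le_top
      | succ k ih =>
        obtain ⟨e, heL, hek, he⟩ := inv k
        intro z hz
        exact A.inter_step A.P1 A.L1 e k (A.P1_eq_zero heL) (fun w hw => A.P1_eq_self hw)
          (fun y hy => A.P1_mem_lcs (k + 1) hy) he (Submodule.mem_inf.2 ⟨ih hz, hz⟩)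
    have hbot : A.L1 = ⊥ := le_bot_iff.1 (h2 ▸ hL1lcs (n + m))
    rw [hbot, finrank_bot] at hm
    omega
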